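/- If the Hessian matrix of the height function h at the origin is degenerate (its determinant vanishes) for the quadratic normal form Whitney umbrella with a₀₂ ≠ 0, then cosθ ≠ 0 and consequently h_vv(0,0) ≠ 0; in particular the Hessian never has rank 0, so h never has a singularity of type D₄ or worse at the origin. -/

import Mathlib

lemma dquad (p q r : ℝ) : deriv (fun x : ℝ => p*x^2 + q*x + r) = fun x => 2*p*x + q := by
  funext x
  have h1 : HasDerivAt (fun x : ℝ => p*x^2 + q*x + r) (p*(2*x) + q) x := by
    simpa using (((hasDerivAt_pow 2 x).const_mul p).add ((hasDerivAt_id x).const_mul q)).add_const r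
  rw [h1.deriv]; ring

lemma d2quad (p q r : ℝ) : deriv (deriv (fun x : ℝ => p*x^2 + q*x + r)) 0 = 2*p := by
  rw [dquad]
  have h1 : HasDerivAt (fun x : ℝ => 2*p*x + q) (2*p) 0 := by
    simpa using ((hasDerivAt_id (0:ℝ)).const_mul (2*p)).add_const q
  rw [h1.deriv]


/-- If the Hessian of the height function at the origin is degenerate then
`cos θ ≠ 0`, hence `h_vv(0,0) ≠ 0`; in particular the Hessian matrix is never zero
(never has rank 0), so `h` has no singularity of type `D₄` or worse at the origin. -/
theorem stmt6 (a20 a11 a02 θ : ℝ) (ha02 : a02 ≠ 0)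
    (A : ℝ)
    (hA : A = Real.sqrt ((Real.cos θ) ^ 2 + (a11 * Real.cos θ + a02 * Real.sin θ) ^ 2))
    (hA0 : A ≠ 0)
    (h : ℝ × ℝ → ℝ)
    (hh : ∀ p : ℝ × ℝ, h p =
      p.1 * 0 + (p.1 * p.2) * (-(a11 * Real.cos θ + a02 * Real.sin θ) / A) +
        ((a20 * p.1 ^ 2 + 2 * a11 * p.1 * p.2 + a02 * p.2 ^ 2) / 2) * (Real.cos θ / A))
    (hdeg : deriv (deriv (fun u => h (u, 0))) 0 * deriv (deriv (fun v => h (0, v))) 0 -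
      (deriv (fun u => deriv (fun v => h (u, v)) 0) 0) ^ 2 = 0) :
    Real.cos θ ≠ 0 ∧
    deriv (deriv (fun v => h (0, v))) 0 ≠ 0 ∧
    (!![deriv (deriv (fun u => h (u, 0))) 0, deriv (fun u => deriv (fun v => h (u, v)) 0) 0;
        deriv (fun u => deriv (fun v => h (u, v)) 0) 0, deriv (deriv (fun v => h (0, v))) 0]
      : Matrix (Fin 2) (Fin 2) ℝ) ≠ 0 := by
  set c := Real.cos θ with hc
  set s := Real.sin θ with hs
  set B : ℝ := -(a11 * c + a02 * s) / A with hB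
  set C : ℝ := c / A with hC
  have huu : deriv (deriv (fun u => h (u, 0))) 0 = a20 * C := by
    have e : (fun u => h (u, 0)) = fun u : ℝ => (a20 * C / 2) * u ^ 2 + 0 * u + 0 := by
      funext u; rw [hh]; simp only [hB, hC]; ring
    rw [e, d2quad]; ring
  have hvv : deriv (deriv (fun v => h (0, v))) 0 = a02 * C := by
    have e : (fun v => h (0, v)) = fun v : ℝ => (a02 * C / 2) * v ^ 2 + 0 * v + 0 := by
      funext v; rw [hh]; simp only [hB, hC]; ring
    rw [e, d2quad]; ring
  have hmix : deriv (fun u => deriv (fun v => h (u, v)) 0) 0 = B + a11 * C := by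
    have e : (fun u : ℝ => deriv (fun v => h (u, v)) 0)
        = fun u : ℝ => 0 * u ^ 2 + (B + a11 * C) * u + 0 := by
      funext u
      have e2 : (fun v => h (u, v))
          = fun v : ℝ => (a02 * C / 2) * v ^ 2 + (u * B + a11 * u * C) * v
              + (a20 * u ^ 2 / 2 * C) := by
        funext v; rw [hh]; simp only [hB, hC]; ring
      rw [e2, dquad]; ring
    rw [e]
    have h1 : HasDerivAt (fun u : ℝ => 0 * u ^ 2 + (B + a11 * C) * u + 0)
        (B + a11 * C) 0 := by
      simpa using ((((hasDerivAt_pow 2 (0:ℝ)).const_mul (0:ℝ)).add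
        ((hasDerivAt_id (0:ℝ)).const_mul (B + a11 * C))).add_const 0)
    rw [h1.deriv]
  rw [huu, hvv, hmix] at hdeg
  have key : a20 * a02 * c ^ 2 - (a02 * s) ^ 2 = 0 := by
    have hB2 : B + a11 * C = -(a02 * s) / A := by rw [hB, hC]; field_simp; ring
    rw [hB2, hC] at hdeg
    field_simp at hdeg
    have h2 : (a20 * a02 * c ^ 2 - (a02 * s) ^ 2) * A ^ 2 = 0 := by
      linear_combination A ^ 2 * hdeg
    rcases mul_eq_zero.mp h2 with h' | h'
    · exact h'
    · exact absurd (pow_eq_zero_iff (by norm_num) |>.mp h') hA0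
  have hcne : c ≠ 0 := by
    intro hc0
    rw [hc0] at key
    have hs0 : s = 0 := by
      have : (a02 * s) ^ 2 = 0 := by linarith
      have := pow_eq_zero_iff (n := 2) (by norm_num) |>.mp this
      rcases mul_eq_zero.mp this with h' | h'
      · exact absurd h' ha02
      · exact h'
    have := Real.sin_sq_add_cos_sq θ
    rw [← hs, ← hc, hs0, hc0] at this
    norm_num at this
  have hvne : a02 * C ≠ 0 := by
    rw [hC]
    exact mul_ne_zero ha02 (div_ne_zero hcne hA0)
  refine ⟨hcne, by rw [hvv]; exact hvne, ?_⟩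
  intro heq
  have := congrFun (congrFun heq 1) 1
  rw [hvv] at this
  simp [Matrix.zero_apply] at this
  rcases this with h' | h'
  · exact ha02 h'
  · exact hvne (by rw [h']; ring)
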